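/- For every integer n ≥ 1 and every real t, one has 1 − U_n(t)² = V_n⁺(t)/V_{n+1}⁺(t); in particular 1 − U_n(t)² > 0, i.e. |U_n(t)| < 1. -/

import Mathlib

open MeasureTheory Matrix Filter

/-- The k-th Fourier coefficient of the symbol `f(e^{iθ}) = e^{2t cos θ}`. -/
noncomputable def fk (t : ℝ) (k : ℤ) : ℝ :=
  (1 / (2 * Real.pi)) *
    ∫ θ in (0:ℝ)..(2 * Real.pi), Real.exp (2 * t * Real.cos θ) * Real.cos ((k : ℝ) * θ)

/-- The n×n Toeplitz matrix `T_n(t)` with (j,k) entry `f_{j-k}(t)`. -/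
noncomputable def Tmat (n : ℕ) (t : ℝ) : Matrix (Fin n) (Fin n) ℝ :=
  fun j k => fk t ((j : ℤ) - (k : ℤ))

/-- The Toeplitz determinant `D_n(t)`. -/
noncomputable def Dn (n : ℕ) (t : ℝ) : ℝ := (Tmat n t).det

/-- δ⁺ = (1,0,…,0)ᵀ. -/
def deltaPlus (n : ℕ) : Fin n → ℝ := fun i => if (i : ℕ) = 0 then 1 else 0

/-- δ⁻ = (0,…,0,1)ᵀ. -/
def deltaMinus (n : ℕ) : Fin n → ℝ := fun i => if (i : ℕ) = n - 1 then 1 else 0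

/-- f⁺ = (f_1,…,f_n)ᵀ. -/
noncomputable def fplus (n : ℕ) (t : ℝ) : Fin n → ℝ := fun j => fk t ((j : ℤ) + 1)

/-- f⁻ = (f_n,…,f_1)ᵀ. -/
noncomputable def fminus (n : ℕ) (t : ℝ) : Fin n → ℝ := fun j => fk t ((n : ℤ) - (j : ℤ))

/-- U_n(t) = ⟨T_n(t)⁻¹ f⁺, δ⁻⟩. -/
noncomputable def Un (n : ℕ) (t : ℝ) : ℝ :=
  dotProduct ((Tmat n t)⁻¹ *ᵥ fplus n t) (deltaMinus n)

/-- V_n⁺(t) = ⟨T_n(t)⁻¹ δ⁺, δ⁺⟩. -/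
noncomputable def Vplus (n : ℕ) (t : ℝ) : ℝ :=
  dotProduct ((Tmat n t)⁻¹ *ᵥ deltaPlus n) (deltaPlus n)

/-- V_n⁻(t) = ⟨T_n(t)⁻¹ δ⁻, δ⁺⟩. -/
noncomputable def Vminus (n : ℕ) (t : ℝ) : ℝ :=
  dotProduct ((Tmat n t)⁻¹ *ᵥ deltaMinus n) (deltaPlus n)

lemma fk_neg (t : ℝ) (k : ℤ) : fk t (-k) = fk t k := by
  unfold fk
  congr 1
  apply intervalIntegral.integral_congr
  intro θ _
  have h : ((-k : ℤ) : ℝ) * θ = -((k : ℝ) * θ) := by push_cast; ring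
  show Real.exp (2*t*Real.cos θ) * Real.cos (((-k : ℤ):ℝ) * θ) = _
  rw [h, Real.cos_neg]

lemma int_cos (a : ℤ) :
    (∫ θ in (0:ℝ)..(2*Real.pi), Real.cos ((a:ℝ) * θ)) = if a = 0 then 2*Real.pi else 0 := by
  rcases eq_or_ne a 0 with h | h
  · simp [h]
  · have ha : (a:ℝ) ≠ 0 := Int.cast_ne_zero.2 h
    rw [if_neg h, intervalIntegral.integral_comp_mul_left Real.cos ha, integral_cos]
    have h1 : (a:ℝ) * (2*Real.pi) = ((2*a : ℤ):ℝ) * Real.pi := by push_cast; ring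
    rw [mul_zero, Real.sin_zero, h1, Real.sin_int_mul_pi, sub_zero, smul_zero]

lemma Ssq (m : ℕ) (c : Fin m → ℝ) (θ : ℝ) :
    ∑ j : Fin m, ∑ k : Fin m, c j * c k * Real.cos ((((j:ℤ) - (k:ℤ) : ℤ) : ℝ) * θ)
      = (∑ j : Fin m, c j * Real.cos ((j:ℝ) * θ))^2 + (∑ j : Fin m, c j * Real.sin ((j:ℝ) * θ))^2 := by
  have hck : ∀ j k : Fin m, Real.cos ((((j:ℤ) - (k:ℤ) : ℤ) : ℝ) * θ)
      = Real.cos ((j:ℝ)*θ) * Real.cos ((k:ℝ)*θ) + Real.sin ((j:ℝ)*θ) * Real.sin ((k:ℝ)*θ) := by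
    intro j k
    have h1 : (((j:ℤ) - (k:ℤ) : ℤ) : ℝ) * θ = (j:ℝ)*θ - (k:ℝ)*θ := by push_cast; ring
    rw [h1, Real.cos_sub]
  simp only [hck]
  rw [sq, sq, Finset.sum_mul_sum, Finset.sum_mul_sum, ← Finset.sum_add_distrib]
  refine Finset.sum_congr rfl fun j _ => ?_
  rw [← Finset.sum_add_distrib]
  exact Finset.sum_congr rfl fun k _ => by ring

lemma intS (m : ℕ) (c : Fin m → ℝ) :
    (∫ θ in (0:ℝ)..(2*Real.pi),
        ∑ j : Fin m, ∑ k : Fin m, c j * c k * Real.cos ((((j:ℤ) - (k:ℤ) : ℤ) : ℝ) * θ))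
      = 2 * Real.pi * ∑ j : Fin m, (c j)^2 := by
  rw [intervalIntegral.integral_finset_sum]
  · have hj : ∀ j : Fin m, (∫ θ in (0:ℝ)..(2*Real.pi),
        ∑ k : Fin m, c j * c k * Real.cos ((((j:ℤ) - (k:ℤ) : ℤ) : ℝ) * θ)) = (c j)^2 * (2*Real.pi) := by
      intro j
      rw [intervalIntegral.integral_finset_sum]
      · have hterm : ∀ k : Fin m, (∫ θ in (0:ℝ)..(2*Real.pi),
            c j * c k * Real.cos ((((j:ℤ) - (k:ℤ) : ℤ) : ℝ) * θ))
            = if k = j then (c j)^2 * (2*Real.pi) else 0 := by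
          intro k
          rw [intervalIntegral.integral_const_mul, int_cos]
          rcases eq_or_ne k j with h | h
          · subst h; simp [sq]
          · rw [if_neg h, if_neg, mul_zero]
            intro hjk
            apply h
            have hv : (j:ℤ) = (k:ℤ) := by omega
            exact (Fin.ext (by exact_mod_cast hv)).symm
        simp only [hterm]
        simp
      · intro k _
        exact (Continuous.intervalIntegrable (by fun_prop) _ _)
    simp only [hj, ← Finset.sum_mul]
    ring
  · intro j _
    apply Continuous.intervalIntegrable
    apply continuous_finset_sum
    intro k _
    fun_prop

lemma quadform (m : ℕ) (t : ℝ) (c : Fin m → ℝ) :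
    dotProduct c (Tmat m t *ᵥ c) =
      (1 / (2 * Real.pi)) *
        ∫ θ in (0:ℝ)..(2*Real.pi),
          Real.exp (2*t*Real.cos θ) *
            ∑ j : Fin m, ∑ k : Fin m, c j * c k * Real.cos ((((j:ℤ) - (k:ℤ) : ℤ) : ℝ) * θ) := by
  have hint : ∀ (j k : Fin m), IntervalIntegrable
      (fun θ => c j * c k * (Real.exp (2*t*Real.cos θ) * Real.cos ((((j:ℤ) - (k:ℤ) : ℤ) : ℝ) * θ)))
      volume 0 (2*Real.pi) := by
    intro j k
    exact Continuous.intervalIntegrable (by fun_prop) _ _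
  have step1 : dotProduct c (Tmat m t *ᵥ c)
      = ∑ j : Fin m, ∑ k : Fin m, (1/(2*Real.pi)) *
          ∫ θ in (0:ℝ)..(2*Real.pi),
            c j * c k * (Real.exp (2*t*Real.cos θ) * Real.cos ((((j:ℤ) - (k:ℤ) : ℤ) : ℝ) * θ)) := by
    simp only [dotProduct, Matrix.mulVec, Tmat, fk, Finset.mul_sum]
    refine Finset.sum_congr rfl fun j _ => Finset.sum_congr rfl fun k _ => ?_
    rw [intervalIntegral.integral_const_mul]
    ring
  rw [step1]
  simp only [← Finset.mul_sum]
  congr 1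
  calc ∑ j : Fin m, ∑ k : Fin m, ∫ θ in (0:ℝ)..(2*Real.pi),
          c j * c k * (Real.exp (2*t*Real.cos θ) * Real.cos ((((j:ℤ) - (k:ℤ) : ℤ) : ℝ) * θ))
      = ∑ j : Fin m, ∫ θ in (0:ℝ)..(2*Real.pi), ∑ k : Fin m,
          c j * c k * (Real.exp (2*t*Real.cos θ) * Real.cos ((((j:ℤ) - (k:ℤ) : ℤ) : ℝ) * θ)) := by
        exact Finset.sum_congr rfl fun j _ =>
          (intervalIntegral.integral_finset_sum (fun k _ => hint j k)).symm
    _ = ∫ θ in (0:ℝ)..(2*Real.pi), ∑ j : Fin m, ∑ k : Fin m,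
          c j * c k * (Real.exp (2*t*Real.cos θ) * Real.cos ((((j:ℤ) - (k:ℤ) : ℤ) : ℝ) * θ)) := by
        refine (intervalIntegral.integral_finset_sum (fun j _ => ?_)).symm
        apply Continuous.intervalIntegrable
        apply continuous_finset_sum
        intro k _
        fun_prop
    _ = ∫ θ in (0:ℝ)..(2*Real.pi),
          Real.exp (2*t*Real.cos θ) *
            ∑ j : Fin m, ∑ k : Fin m, c j * c k * Real.cos ((((j:ℤ) - (k:ℤ) : ℤ) : ℝ) * θ) := by
        apply intervalIntegral.integral_congr
        intro θ _
        simp only [Finset.mul_sum]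
        refine Finset.sum_congr rfl fun j _ => Finset.sum_congr rfl fun k _ => by ring

lemma tmat_posDef (m : ℕ) (t : ℝ) : (Tmat m t).PosDef := by
  rw [Matrix.posDef_iff_dotProduct_mulVec]
  constructor
  · show (Tmat m t)ᴴ = Tmat m t
    ext j k
    show star (Tmat m t k j) = Tmat m t j k
    rw [star_trivial]
    show fk t ((k:ℤ) - (j:ℤ)) = fk t ((j:ℤ) - (k:ℤ))
    rw [show (k:ℤ) - (j:ℤ) = -((j:ℤ) - (k:ℤ)) by ring, fk_neg]
  · intro c hc
    have hstar : star c = c := by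
      funext i; exact star_trivial _
    rw [hstar, quadform]
    -- rewrite integrand with Ssq
    set P : ℝ → ℝ := fun θ =>
      (∑ j : Fin m, c j * Real.cos ((j:ℝ) * θ))^2 + (∑ j : Fin m, c j * Real.sin ((j:ℝ) * θ))^2
      with hP
    have hPeq : (∫ θ in (0:ℝ)..(2*Real.pi),
          Real.exp (2*t*Real.cos θ) *
            ∑ j : Fin m, ∑ k : Fin m, c j * c k * Real.cos ((((j:ℤ) - (k:ℤ) : ℤ) : ℝ) * θ))
        = ∫ θ in (0:ℝ)..(2*Real.pi), Real.exp (2*t*Real.cos θ) * P θ := by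
      apply intervalIntegral.integral_congr
      intro θ _
      show Real.exp (2*t*Real.cos θ) * _ = Real.exp (2*t*Real.cos θ) * P θ
      rw [Ssq, hP]
    rw [hPeq]
    have hPcont : Continuous P := by
      apply Continuous.add
      · exact (continuous_finset_sum _ (fun j _ => by fun_prop)).pow 2
      · exact (continuous_finset_sum _ (fun j _ => by fun_prop)).pow 2
    have hPnonneg : ∀ θ, 0 ≤ P θ := fun θ => by positivity
    have hmono : (∫ θ in (0:ℝ)..(2*Real.pi), Real.exp (-(2*|t|)) * P θ)
        ≤ ∫ θ in (0:ℝ)..(2*Real.pi), Real.exp (2*t*Real.cos θ) * P θ := by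
      apply intervalIntegral.integral_mono_on (by positivity)
      · exact Continuous.intervalIntegrable (by fun_prop) _ _
      · exact Continuous.intervalIntegrable (by fun_prop) _ _
      · intro θ _
        apply mul_le_mul_of_nonneg_right _ (hPnonneg θ)
        apply Real.exp_le_exp.2
        have h1 : |t * Real.cos θ| ≤ |t| := by
          rw [abs_mul]
          nlinarith [Real.abs_cos_le_one θ, abs_nonneg t]
        have := neg_abs_le (t * Real.cos θ)
        nlinarith [abs_nonneg (t * Real.cos θ)]
    have hintP : (∫ θ in (0:ℝ)..(2*Real.pi), P θ) = 2 * Real.pi * ∑ j : Fin m, (c j)^2 := by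
      rw [← intS m c]
      apply intervalIntegral.integral_congr
      intro θ _
      exact (Ssq m c θ).symm
    have hlow : (∫ θ in (0:ℝ)..(2*Real.pi), Real.exp (-(2*|t|)) * P θ)
        = Real.exp (-(2*|t|)) * (2 * Real.pi * ∑ j : Fin m, (c j)^2) := by
      rw [intervalIntegral.integral_const_mul, hintP]
    have hsum : 0 < ∑ j : Fin m, (c j)^2 := by
      obtain ⟨i, hi⟩ := Function.ne_iff.1 hc
      apply Finset.sum_pos' (fun j _ => sq_nonneg (c j))
      exact ⟨i, Finset.mem_univ i, sq_pos_of_ne_zero hi⟩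
    have hpi := Real.pi_pos
    have h2 : 0 < ∫ θ in (0:ℝ)..(2*Real.pi), Real.exp (2*t*Real.cos θ) * P θ := by
      have : 0 < Real.exp (-(2*|t|)) * (2 * Real.pi * ∑ j : Fin m, (c j)^2) := by positivity
      linarith [hmono, hlow.symm.trans_le hmono]
    have h3 : 0 < 1/(2*Real.pi) := by positivity
    exact mul_pos h3 h2

/-- 1 − U_n(t)² = V_n⁺(t)/V_{n+1}⁺(t); in particular 1 − U_n(t)² > 0, i.e. |U_n(t)| < 1. -/
theorem one_sub_Un_sq_eq_Vplus_ratio (n : ℕ) (hn : 1 ≤ n) (t : ℝ) :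
    1 - (Un n t) ^ 2 = Vplus n t / Vplus (n + 1) t ∧
      0 < 1 - (Un n t) ^ 2 ∧ |Un n t| < 1 := by
  obtain ⟨m, rfl⟩ : ∃ m, n = m + 1 := ⟨n - 1, by omega⟩
  clear hn
  have hT : (Tmat (m+1) t).PosDef := tmat_posDef _ t
  have hA : (Tmat (m+1+1) t).PosDef := tmat_posDef _ t
  have hTdet : IsUnit (Tmat (m+1) t).det := hT.det_pos.ne'.isUnit
  have hAdet : IsUnit (Tmat (m+1+1) t).det := hA.det_pos.ne'.isUnit
  have hTmul : Tmat (m+1) t * (Tmat (m+1) t)⁻¹ = 1 := Matrix.mul_nonsing_inv _ hTdet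
  have hAmul' : (Tmat (m+1+1) t)⁻¹ * Tmat (m+1+1) t = 1 := Matrix.nonsing_inv_mul _ hAdet
  have cancelA : ∀ w : Fin (m+1+1) → ℝ, (Tmat (m+1+1) t)⁻¹ *ᵥ (Tmat (m+1+1) t *ᵥ w) = w := by
    intro w; rw [Matrix.mulVec_mulVec, hAmul', Matrix.one_mulVec]
  -- basic vectors
  set x : Fin (m+1) → ℝ := (Tmat (m+1) t)⁻¹ *ᵥ fplus (m+1) t with hxd
  set z : Fin (m+1) → ℝ := (Tmat (m+1) t)⁻¹ *ᵥ deltaPlus (m+1) with hzd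
  set U : ℝ := Un (m+1) t with hUd
  set s : ℝ := fk t 0 - dotProduct (fplus (m+1) t) x with hsd
  have hTx : Tmat (m+1) t *ᵥ x = fplus (m+1) t := by
    rw [hxd, Matrix.mulVec_mulVec, hTmul, Matrix.one_mulVec]
  have hTz : Tmat (m+1) t *ᵥ z = deltaPlus (m+1) := by
    rw [hzd, Matrix.mulVec_mulVec, hTmul, Matrix.one_mulVec]
  -- dot products with delta vectors
  have dot_deltaPlus : ∀ (k : ℕ) (v : Fin (k+1) → ℝ), dotProduct v (deltaPlus (k+1)) = v 0 := by
    intro k v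
    have h : ∀ i : Fin (k+1), v i * (deltaPlus (k+1) i) = if i = 0 then v i else 0 := by
      intro i
      by_cases h : i = 0
      · subst h; simp [deltaPlus]
      · rw [if_neg h]
        have : ¬ ((i:ℕ) = 0) := fun hv => h (Fin.ext (by simpa using hv))
        simp [deltaPlus, this]
    simp only [dotProduct, h]
    simp
  have dot_deltaMinus : ∀ (v : Fin (m+1) → ℝ), dotProduct v (deltaMinus (m+1)) = v (Fin.last m) := by
    intro v
    have h : ∀ i : Fin (m+1), v i * (deltaMinus (m+1) i) = if i = Fin.last m then v i else 0 := by
      intro i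
      by_cases h : i = Fin.last m
      · subst h; simp [deltaMinus]
      · rw [if_neg h]
        have : ¬ ((i:ℕ) = m) := by
          intro hv; exact h (Fin.ext (by simpa [Fin.val_last] using hv))
        simp [deltaMinus, this]
    simp only [dotProduct, h]
    simp
  have hUx : U = x (Fin.last m) := by
    rw [hUd]; unfold Un; exact dot_deltaMinus x
  -- integer value of rev
  have hrevZ : ∀ i : Fin (m+1), ((Fin.rev i : Fin (m+1)) : ℤ) = (m:ℤ) - (i:ℤ) := by
    intro i
    have h1 : (Fin.rev i).val = m + 1 - (i.val + 1) := Fin.val_rev i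
    have h2 := i.isLt
    omega
  -- symmetry of T entries under rev
  have hsymmT : ∀ j k : Fin (m+1), Tmat (m+1) t j (Fin.rev k) = Tmat (m+1) t (Fin.rev j) k := by
    intro j k
    show fk t ((j:ℤ) - ((Fin.rev k : Fin (m+1)) : ℤ)) = fk t (((Fin.rev j : Fin (m+1)) : ℤ) - (k:ℤ))
    rw [hrevZ, hrevZ, show (j:ℤ) - ((m:ℤ) - (k:ℤ)) = -(((m:ℤ) - (j:ℤ)) - (k:ℤ)) by ring, fk_neg]
  have hTy : Tmat (m+1) t *ᵥ (fun j => x (Fin.rev j)) = fminus (m+1) t := by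
    funext j
    show ∑ k, Tmat (m+1) t j k * x (Fin.rev k) = fminus (m+1) t j
    have hre : ∑ k, Tmat (m+1) t j (Fin.rev k) * x k = ∑ k, Tmat (m+1) t j k * x (Fin.rev k) :=
      Fintype.sum_bijective Fin.rev (Fin.rev_involutive.bijective) _ _
        (fun k => by rw [Fin.rev_rev])
    rw [← hre]
    have : ∑ k, Tmat (m+1) t j (Fin.rev k) * x k = (Tmat (m+1) t *ᵥ x) (Fin.rev j) := by
      simp only [Matrix.mulVec, dotProduct]
      exact Finset.sum_congr rfl fun k _ => by rw [hsymmT]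
    rw [this, hTx]
    show fk t (((Fin.rev j : Fin (m+1)) : ℤ) + 1) = fk t ((((m:ℕ)+1 : ℕ) : ℤ) - (j:ℤ))
    rw [hrevZ]
    congr 1
    push_cast
    ring
  have hrev0 : Fin.rev (0 : Fin (m+1)) = Fin.last m := by
    ext
    rw [Fin.val_rev]
    simp
  have hy0 : x (Fin.rev 0) = U := by rw [hrev0, hUx]
  -- transpose
  have hTt : (Tmat (m+1) t)ᵀ = Tmat (m+1) t := by
    ext j k
    show fk t ((k:ℤ) - (j:ℤ)) = fk t ((j:ℤ) - (k:ℤ))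
    rw [show (k:ℤ) - (j:ℤ) = -((j:ℤ) - (k:ℤ)) by ring, fk_neg]
  -- f⁻ ⬝ z = U
  have hfz : dotProduct (fminus (m+1) t) z = U := by
    rw [← hTy]
    rw [dotProduct_comm, Matrix.dotProduct_mulVec, ← Matrix.mulVec_transpose, hTt, hTz]
    rw [dotProduct_comm, dot_deltaPlus]
    exact hy0
  -- f⁻ ⬝ y = f⁺ ⬝ x
  have hfy : dotProduct (fminus (m+1) t) (fun j => x (Fin.rev j)) = dotProduct (fplus (m+1) t) x := by
    show ∑ j, fminus (m+1) t j * x (Fin.rev j) = ∑ j, fplus (m+1) t j * x j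
    refine (Fintype.sum_bijective Fin.rev (Fin.rev_involutive.bijective) _ _ ?_).symm
    intro j
    rw [Fin.rev_rev]
    congr 1
    show fk t ((j:ℤ) + 1) = fk t ((((m:ℕ)+1 : ℕ) : ℤ) - ((Fin.rev j : Fin (m+1)) : ℤ))
    rw [hrevZ]
    congr 1
    push_cast
    ring
  -- cast helpers on Fin (m+1+1)
  have h0Z : ((0 : Fin (m+1+1)) : ℤ) = 0 := by simp
  have hks : ∀ k : Fin (m+1), ((Fin.succ k : Fin (m+1+1)) : ℤ) = (k:ℤ) + 1 := by
    intro k; rw [Fin.val_succ]; push_cast; ring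
  have hcs : ∀ k : Fin (m+1), ((Fin.castSucc k : Fin (m+1+1)) : ℤ) = (k:ℤ) := by
    intro k; rw [Fin.coe_castSucc]
  have hlZ : ((Fin.last (m+1) : Fin (m+1+1)) : ℤ) = (m:ℤ) + 1 := by
    rw [Fin.val_last]; push_cast; ring
  -- entries of the big matrix
  have hA00 : Tmat (m+1+1) t 0 0 = fk t 0 := by
    show fk t _ = _; rw [h0Z]; norm_num
  have hA0s : ∀ k : Fin (m+1), Tmat (m+1+1) t 0 k.succ = fplus (m+1) t k := by
    intro k
    show fk t (((0 : Fin (m+1+1)) : ℤ) - ((Fin.succ k : Fin (m+1+1)) : ℤ)) = fk t ((k:ℤ) + 1)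
    rw [h0Z, hks, show (0:ℤ) - ((k:ℤ)+1) = -((k:ℤ)+1) by ring, fk_neg]
  have hAs0 : ∀ j : Fin (m+1), Tmat (m+1+1) t j.succ 0 = fplus (m+1) t j := by
    intro j
    show fk t _ = fk t _
    rw [h0Z, hks]
    norm_num
  have hAss : ∀ j k : Fin (m+1), Tmat (m+1+1) t j.succ k.succ = Tmat (m+1) t j k := by
    intro j k
    show fk t _ = fk t _
    rw [hks, hks]
    congr 1
    ring
  have hAcc : ∀ j k : Fin (m+1), Tmat (m+1+1) t j.castSucc k.castSucc = Tmat (m+1) t j k := by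
    intro j k
    show fk t _ = fk t _
    rw [hcs, hcs]
  have hAcl : ∀ j : Fin (m+1), Tmat (m+1+1) t j.castSucc (Fin.last (m+1)) = fminus (m+1) t j := by
    intro j
    show fk t _ = fk t ((((m:ℕ)+1:ℕ) : ℤ) - (j:ℤ))
    rw [hcs, hlZ, show (j:ℤ) - ((m:ℤ)+1) = -(((m:ℤ)+1) - (j:ℤ)) by ring, fk_neg]
    congr 1
  have hAlc : ∀ k : Fin (m+1), Tmat (m+1+1) t (Fin.last (m+1)) k.castSucc = fminus (m+1) t k := by
    intro k
    show fk t _ = fk t ((((m:ℕ)+1:ℕ) : ℤ) - (k:ℤ))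
    rw [hcs, hlZ]
    congr 1
  have hAll : Tmat (m+1+1) t (Fin.last (m+1)) (Fin.last (m+1)) = fk t 0 := by
    show fk t _ = _
    rw [hlZ]; norm_num
  -- delta values
  have hd0 : deltaPlus (m+1+1) 0 = 1 := by simp [deltaPlus]
  have hds : ∀ j : Fin (m+1), deltaPlus (m+1+1) j.succ = 0 := by
    intro j; simp [deltaPlus, Fin.val_succ]
  have hdc : ∀ j : Fin (m+1), deltaPlus (m+1+1) j.castSucc = deltaPlus (m+1) j := by
    intro j; simp [deltaPlus, Fin.coe_castSucc]
  have hdl : deltaPlus (m+1+1) (Fin.last (m+1)) = 0 := by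
    simp [deltaPlus, Fin.val_last]
  -- the vector v1 solving A v1 = s δ⁺
  set v1 : Fin (m+1+1) → ℝ := Fin.cons 1 (fun j : Fin (m+1) => -x j) with hv1
  have hAv : Tmat (m+1+1) t *ᵥ v1 = s • deltaPlus (m+1+1) := by
    funext i
    show ∑ k, Tmat (m+1+1) t i k * v1 k = s * deltaPlus (m+1+1) i
    induction i using Fin.cases with
    | zero =>
      rw [Fin.sum_univ_succ]
      simp only [hv1, Fin.cons_zero, Fin.cons_succ, hA00, hA0s, hd0]
      have : ∑ k : Fin (m+1), fplus (m+1) t k * -x k = -(dotProduct (fplus (m+1) t) x) := by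
        simp [dotProduct, Finset.sum_neg_distrib]
      rw [this, hsd]
      ring
    | succ j =>
      rw [Fin.sum_univ_succ]
      simp only [hv1, Fin.cons_zero, Fin.cons_succ, hAs0 j, hds j]
      have h1 : ∑ k : Fin (m+1), Tmat (m+1+1) t j.succ k.succ * -x k
          = -((Tmat (m+1) t *ᵥ x) j) := by
        simp only [Matrix.mulVec, dotProduct, hAss]
        simp [Finset.sum_neg_distrib]
      rw [h1, hTx]
      ring
  have hs0 : s ≠ 0 := by
    intro hs
    have h1 : Tmat (m+1+1) t *ᵥ v1 = 0 := by rw [hAv, hs, zero_smul]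
    have h2 : v1 = 0 := by
      have := congrArg (fun w => (Tmat (m+1+1) t)⁻¹ *ᵥ w) h1
      simp only [cancelA v1, Matrix.mulVec_zero] at this
      exact this
    have h3 : (1:ℝ) = 0 := by
      have h4 := congrFun h2 0
      simp only [hv1, Fin.cons_zero] at h4
      exact h4
    norm_num at h3
  have hAinvd : (Tmat (m+1+1) t)⁻¹ *ᵥ deltaPlus (m+1+1) = s⁻¹ • v1 := by
    have h1 : deltaPlus (m+1+1) = s⁻¹ • (Tmat (m+1+1) t *ᵥ v1) := by
      rw [hAv, smul_smul, inv_mul_cancel₀ hs0, one_smul]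
    rw [h1, Matrix.mulVec_smul, cancelA]
  have hVs : Vplus (m+1+1) t = s⁻¹ := by
    show dotProduct ((Tmat (m+1+1) t)⁻¹ *ᵥ deltaPlus (m+1+1)) (deltaPlus (m+1+1)) = s⁻¹
    rw [hAinvd, dot_deltaPlus (m+1)]
    simp [hv1, Fin.cons_zero]
  -- second solution q of A q = s δ⁺
  set q : Fin (m+1+1) → ℝ :=
    Fin.snoc (fun j : Fin (m+1) => s * z j + U * x (Fin.rev j)) (-U) with hq
  have hAq : Tmat (m+1+1) t *ᵥ q = s • deltaPlus (m+1+1) := by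
    funext i
    show ∑ k, Tmat (m+1+1) t i k * q k = s * deltaPlus (m+1+1) i
    induction i using Fin.lastCases with
    | cast j =>
      rw [Fin.sum_univ_castSucc]
      simp only [hq, Fin.snoc_castSucc, Fin.snoc_last, hAcc, hAcl, hdc]
      have h1 : ∑ k : Fin (m+1), Tmat (m+1) t j k * (s * z k + U * x (Fin.rev k))
          = s * (Tmat (m+1) t *ᵥ z) j + U * (Tmat (m+1) t *ᵥ (fun j => x (Fin.rev j))) j := by
        simp only [Matrix.mulVec, dotProduct, Finset.mul_sum, ← Finset.sum_add_distrib]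
        exact Finset.sum_congr rfl fun k _ => by ring
      rw [h1, hTz, hTy]
      ring
    | last =>
      rw [Fin.sum_univ_castSucc]
      simp only [hq, Fin.snoc_castSucc, Fin.snoc_last, hAlc, hAll, hdl]
      have h1 : ∑ k : Fin (m+1), fminus (m+1) t k * (s * z k + U * x (Fin.rev k))
          = s * dotProduct (fminus (m+1) t) z
            + U * dotProduct (fminus (m+1) t) (fun j => x (Fin.rev j)) := by
        simp only [dotProduct, Finset.mul_sum, ← Finset.sum_add_distrib]
        exact Finset.sum_congr rfl fun k _ => by ring
      rw [h1, hfz, hfy, hsd]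
      ring
  have hvq : v1 = q := by
    calc v1 = (Tmat (m+1+1) t)⁻¹ *ᵥ (Tmat (m+1+1) t *ᵥ v1) := (cancelA v1).symm
    _ = (Tmat (m+1+1) t)⁻¹ *ᵥ (Tmat (m+1+1) t *ᵥ q) := by rw [hAv, hAq]
    _ = q := cancelA q
  have key : (1:ℝ) = s * z 0 + U * U := by
    have h1 := congrFun hvq (Fin.castSucc (0 : Fin (m+1)))
    rw [hv1, hq, Fin.snoc_castSucc] at h1
    rw [show Fin.castSucc (0 : Fin (m+1)) = (0 : Fin (m+1+1)) from rfl, Fin.cons_zero] at h1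
    rw [hrev0, ← hUx] at h1
    exact h1
  have hz0 : Vplus (m+1) t = z 0 := by
    show dotProduct ((Tmat (m+1) t)⁻¹ *ᵥ deltaPlus (m+1)) (deltaPlus (m+1)) = z 0
    rw [← hzd, dot_deltaPlus m z]
  -- positivity
  have hVpos : 0 < Vplus (m+1) t := by
    have hinv : ((Tmat (m+1) t)⁻¹).PosDef := hT.inv
    have hne : deltaPlus (m+1) ≠ 0 := by
      intro h
      have := congrFun h 0
      simp [deltaPlus] at this
    have hp := hinv.dotProduct_mulVec_pos hne
    have hstar : star (deltaPlus (m+1)) = deltaPlus (m+1) := by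
      funext i; exact star_trivial _
    rw [hstar] at hp
    show 0 < dotProduct ((Tmat (m+1) t)⁻¹ *ᵥ deltaPlus (m+1)) (deltaPlus (m+1))
    rwa [dotProduct_comm]
  have hVpos2 : 0 < Vplus (m+1+1) t := by
    have hinv : ((Tmat (m+1+1) t)⁻¹).PosDef := hA.inv
    have hne : deltaPlus (m+1+1) ≠ 0 := by
      intro h
      have := congrFun h 0
      simp [deltaPlus] at this
    have hp := hinv.dotProduct_mulVec_pos hne
    have hstar : star (deltaPlus (m+1+1)) = deltaPlus (m+1+1) := by
      funext i; exact star_trivial _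
    rw [hstar] at hp
    show 0 < dotProduct ((Tmat (m+1+1) t)⁻¹ *ᵥ deltaPlus (m+1+1)) (deltaPlus (m+1+1))
    rwa [dotProduct_comm]
  have hspos : 0 < s := by
    rw [hVs] at hVpos2
    exact inv_pos.mp hVpos2
  have hmain : 1 - U ^ 2 = Vplus (m+1) t * s := by
    rw [hz0, sq]
    linarith [key]
  have hdiv : Vplus (m+1) t / Vplus (m+1+1) t = Vplus (m+1) t * s := by
    rw [hVs, div_eq_mul_inv, inv_inv]
  refine ⟨?_, ?_, ?_⟩
  · rw [hdiv]; exact hmain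
  · rw [hmain]; exact mul_pos hVpos hspos
  · have h2 : U^2 < 1 := by nlinarith [mul_pos hVpos hspos, hmain]
    exact (sq_lt_one_iff_abs_lt_one U).mp h2
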